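/- Every finite nonempty solid subset C of an infinite abelian group G is a maximal supplement in G, i.e., there exists W ⊆ G such that C is a supplement for W and no proper superset of C is a supplement for W. -/

import Mathlib

open Pointwise

/-- `C` is a supplement for `W`: every element has at most one representation `w + c`. -/
def IsSupplement {G : Type*} [AddCommGroup G] (W C : Set G) : Prop :=
  ∀ w₁ ∈ W, ∀ c₁ ∈ C, ∀ w₂ ∈ W, ∀ c₂ ∈ C, w₁ + c₁ = w₂ + c₂ → w₁ = w₂ ∧ c₁ = c₂

noncomputable section SuppAux

variable {G : Type*} [AddCommGroup G]

open scoped Classical in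
/-- One step of the transfinite construction. -/
def suppStep (C : Set G) (e : (Cardinal.mk G).ord.ToType ≃ G)
    (sol : ∀ x, x ∉ C → ∃ c, c ∈ C ∧ x - c ∉ C - C)
    (a : (Cardinal.mk G).ord.ToType)
    (rec : ∀ b, b < a → Set G) : Set G :=
  if hx : e a ∈ C then ∅
  else if ht : ∃ t : G, t ∉ ((⋃ b, ⋃ _h : b < a, rec b ‹_›) + (C - C)) ∧
      t + (e a - (sol (e a) hx).choose) ∉ ((⋃ b, ⋃ _h : b < a, rec b ‹_›) + (C - C)) then
    {ht.choose, ht.choose + (e a - (sol (e a) hx).choose)}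
  else ∅

def suppF (C : Set G) (e : (Cardinal.mk G).ord.ToType ≃ G)
    (sol : ∀ x, x ∉ C → ∃ c, c ∈ C ∧ x - c ∉ C - C) :
    (Cardinal.mk G).ord.ToType → Set G :=
  (inferInstance : WellFoundedLT ((Cardinal.mk G).ord.ToType)).wf.fix (suppStep C e sol)

/-- Union of all earlier stages. -/
def suppW (C : Set G) (e : (Cardinal.mk G).ord.ToType ≃ G)
    (sol : ∀ x, x ∉ C → ∃ c, c ∈ C ∧ x - c ∉ C - C)
    (a : (Cardinal.mk G).ord.ToType) : Set G :=
  ⋃ b, ⋃ _h : b < a, suppF C e sol b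

theorem suppF_eq (C : Set G) (e : (Cardinal.mk G).ord.ToType ≃ G)
    (sol : ∀ x, x ∉ C → ∃ c, c ∈ C ∧ x - c ∉ C - C)
    (a : (Cardinal.mk G).ord.ToType) :
    suppF C e sol a = suppStep C e sol a (fun b _ => suppF C e sol b) :=
  WellFounded.fix_eq _ _ a

theorem suppF_empty (C : Set G) (e : (Cardinal.mk G).ord.ToType ≃ G)
    (sol : ∀ x, x ∉ C → ∃ c, c ∈ C ∧ x - c ∉ C - C)
    (a : (Cardinal.mk G).ord.ToType) (hx : e a ∈ C) :
    suppF C e sol a = ∅ := by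
  rw [suppF_eq]; unfold suppStep; rw [dif_pos hx]

theorem suppF_spec (C : Set G) (e : (Cardinal.mk G).ord.ToType ≃ G)
    (sol : ∀ x, x ∉ C → ∃ c, c ∈ C ∧ x - c ∉ C - C)
    (a : (Cardinal.mk G).ord.ToType) (hx : e a ∉ C)
    (ht : ∃ t : G, t ∉ (suppW C e sol a + (C - C)) ∧
      t + (e a - (sol (e a) hx).choose) ∉ (suppW C e sol a + (C - C))) :
    ∃ t : G, t ∉ (suppW C e sol a + (C - C)) ∧
      t + (e a - (sol (e a) hx).choose) ∉ (suppW C e sol a + (C - C)) ∧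
      suppF C e sol a = {t, t + (e a - (sol (e a) hx).choose)} := by
  refine ⟨ht.choose, ht.choose_spec.1, ht.choose_spec.2, ?_⟩
  rw [suppF_eq]; unfold suppStep
  unfold suppW at ht
  rw [dif_neg hx, dif_pos ht]
  rfl

theorem suppF_small (C : Set G) (e : (Cardinal.mk G).ord.ToType ≃ G)
    (sol : ∀ x, x ∉ C → ∃ c, c ∈ C ∧ x - c ∉ C - C)
    (a : (Cardinal.mk G).ord.ToType) :
    ∃ u v : G, suppF C e sol a ⊆ {u, v} := by
  rw [suppF_eq]; unfold suppStep
  split_ifs with h1 h2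
  · exact ⟨e a, e a, by simp⟩
  · exact ⟨_, _, subset_rfl⟩
  · exact ⟨e a, e a, by simp⟩

end SuppAux

/-- Every finite nonempty solid subset of an infinite abelian group is a maximal
supplement. -/
theorem solid_finite_is_maximal_supplement {G : Type*} [AddCommGroup G] [Infinite G]
    (C : Set G) (hfin : C.Finite) (hne : C.Nonempty)
    (hsolid : ¬ ∃ D : Set G, C ⊂ D ∧ D - D = C - C) :
    ∃ W : Set G, IsSupplement W C ∧ ∀ D : Set G, C ⊂ D → ¬ IsSupplement W D := by
  classical
  -- symmetry of the difference set
  have hCCsymm : ∀ g : G, g ∈ C - C → -g ∈ C - C := by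
    intro g hg
    rw [Set.mem_sub] at hg ⊢
    obtain ⟨x, hx, y, hy, hxy⟩ := hg
    exact ⟨y, hy, x, hx, by rw [← hxy]; abel⟩
  -- solidity in usable form
  have sol : ∀ x, x ∉ C → ∃ c, c ∈ C ∧ x - c ∉ C - C := by
    intro x hx
    by_contra h
    push_neg at h
    apply hsolid
    refine ⟨insert x C, Set.ssubset_insert hx, Set.Subset.antisymm ?_ ?_⟩
    · rintro g hg
      rw [Set.mem_sub] at hg
      obtain ⟨u, hu, v, hv, huv⟩ := hg
      subst huv
      rcases Set.mem_insert_iff.mp hu with hu' | hu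
      · rcases Set.mem_insert_iff.mp hv with hv' | hv
        · obtain ⟨c₀, hc₀⟩ := hne
          rw [hu', hv', sub_self]
          simpa using Set.sub_mem_sub hc₀ hc₀
        · rw [hu']
          exact h v hv
      · rcases Set.mem_insert_iff.mp hv with hv' | hv
        · rw [hv']
          simpa [neg_sub] using hCCsymm _ (h u hu)
        · exact Set.sub_mem_sub hu hv
    · exact Set.sub_subset_sub (Set.subset_insert _ _) (Set.subset_insert _ _)
  -- fix sol statement mismatch: h gives ∀ c ∈ C, x - c ∈ C - C
  obtain ⟨e⟩ : Nonempty ((Cardinal.mk G).ord.ToType ≃ G) :=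
    Cardinal.eq.mp (Cardinal.mk_ord_toType _)
  have hκ : Cardinal.aleph0 ≤ Cardinal.mk G := Cardinal.infinite_iff.mp ‹Infinite G›
  have h2κ : (2 : Cardinal) < Cardinal.mk G :=
    lt_of_lt_of_le (by simpa using Cardinal.nat_lt_aleph0 2) hκ
  -- cardinality of earlier stages
  have hWlt : ∀ a, Cardinal.mk (suppW C e sol a) < Cardinal.mk G := by
    intro a
    have hsub : suppW C e sol a ⊆ ⋃ b : Set.Iio a, suppF C e sol b := by
      intro g hg
      simp only [suppW, Set.mem_iUnion] at hg ⊢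
      obtain ⟨b, hb, hgb⟩ := hg
      exact ⟨⟨b, hb⟩, hgb⟩
    calc Cardinal.mk (suppW C e sol a)
        ≤ Cardinal.mk (⋃ b : Set.Iio a, suppF C e sol b) :=
          Cardinal.mk_le_mk_of_subset hsub
      _ ≤ Cardinal.sum (fun b : Set.Iio a => Cardinal.mk (suppF C e sol b)) :=
          Cardinal.mk_iUnion_le_sum_mk
      _ ≤ Cardinal.sum (fun _ : Set.Iio a => 2) := by
          refine Cardinal.sum_le_sum _ _ fun b => ?_
          obtain ⟨u, v, hsub2⟩ := suppF_small C e sol b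
          refine le_trans (Cardinal.mk_le_mk_of_subset hsub2) ?_
          refine le_trans Cardinal.mk_insert_le ?_
          rw [Cardinal.mk_singleton]
          norm_num
      _ = Cardinal.mk (Set.Iio a) * 2 := Cardinal.sum_const' _ 2
      _ < Cardinal.mk G :=
          Cardinal.mul_lt_of_lt hκ (Cardinal.mk_Iio_ord_toType a) h2κ
  -- generic element avoiding a small bad set
  have hBad : ∀ W : Set G, Cardinal.mk W < Cardinal.mk G → ∀ d : G,
      ∃ t : G, t ∉ W + (C - C) ∧ t + d ∉ W + (C - C) := by
    intro W hW d
    have hCC : Cardinal.mk (C - C : Set G) < Cardinal.aleph0 := (hfin.sub hfin).lt_aleph0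
    have h1 : Cardinal.mk (W + (C - C) : Set G) < Cardinal.mk G := by
      have him := Cardinal.mk_image2_le (f := (· + ·)) (s := W) (t := (C - C : Set G))
      rw [Set.image2_add] at him
      exact lt_of_le_of_lt him
        (Cardinal.mul_lt_of_lt hκ hW (lt_of_lt_of_le hCC hκ))
    have h2 : Cardinal.mk ((fun t => t + d) ⁻¹' (W + (C - C)) : Set G) < Cardinal.mk G :=
      lt_of_le_of_lt (Cardinal.mk_preimage_of_injective _ _ (add_left_injective d)) h1
    by_contra hcon
    have hsub : (Set.univ : Set G) ⊆ (W + (C - C)) ∪ ((fun t => t + d) ⁻¹' (W + (C - C))) := by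
      intro t _
      by_contra ht
      simp only [Set.mem_union, not_or] at ht
      exact hcon ⟨t, ht.1, ht.2⟩
    have hle := Cardinal.mk_le_mk_of_subset hsub
    rw [Cardinal.mk_univ] at hle
    exact absurd hle (not_le.mpr (lt_of_le_of_lt (Cardinal.mk_union_le _ _)
      (Cardinal.add_lt_of_lt hκ h1 h2)))
  -- characterization of the stages for x ∉ C
  have hchar : ∀ a (hx : e a ∉ C),
      ∃ t : G, t ∉ (suppW C e sol a + (C - C)) ∧
        t + (e a - (sol (e a) hx).choose) ∉ (suppW C e sol a + (C - C)) ∧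
        suppF C e sol a = {t, t + (e a - (sol (e a) hx).choose)} :=
    fun a hx => suppF_spec C e sol a hx (hBad _ (hWlt a) _)
  -- pairwise difference property
  have hhalf : ∀ a b, b < a → ∀ w ∈ suppF C e sol a, ∀ w' ∈ suppF C e sol b,
      w - w' ∉ C - C := by
    intro a b hba w hw w' hw' hd
    by_cases hx : e a ∈ C
    · rw [suppF_empty C e sol a hx] at hw
      exact Set.notMem_empty w hw
    · obtain ⟨t, ht1, ht2, hfa⟩ := hchar a hx
      have hw'W : w' ∈ suppW C e sol a := by
        simp only [suppW, Set.mem_iUnion]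
        exact ⟨b, hba, hw'⟩
      have hwmem : w ∈ suppW C e sol a + (C - C) := by
        have hww : w = w' + (w - w') := by abel
        rw [hww]
        exact Set.add_mem_add hw'W hd
      rw [hfa] at hw
      rcases hw with rfl | hw
      · exact ht1 hwmem
      · rw [Set.mem_singleton_iff] at hw
        subst hw
        exact ht2 hwmem
  have hdiff : ∀ a b, ∀ w ∈ suppF C e sol a, ∀ w' ∈ suppF C e sol b,
      w - w' ∈ C - C → w = w' := by
    intro a b w hw w' hw' hd
    rcases lt_trichotomy a b with h | rfl | h
    · exact absurd (by simpa [neg_sub] using hCCsymm _ hd) (hhalf b a h w' hw' w hw)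
    · by_cases hx : e a ∈ C
      · rw [suppF_empty C e sol a hx] at hw
        exact absurd hw (Set.notMem_empty w)
      · obtain ⟨t, ht1, ht2, hfa⟩ := hchar a hx
        have hdC : e a - (sol (e a) hx).choose ∉ C - C := (sol (e a) hx).choose_spec.2
        rw [hfa] at hw hw'
        rcases hw with rfl | hw <;> rcases hw' with h' | h'
        · rw [h']
        · rw [Set.mem_singleton_iff] at h'
          subst h'
          exact absurd (by simpa [neg_sub] using hCCsymm _ hd) (by simpa using hdC)
        · rw [Set.mem_singleton_iff] at hw
          subst hw
          rw [← h'] at hd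
          exact absurd (by simpa using hd) hdC
        · rw [Set.mem_singleton_iff] at hw h'
          rw [hw, h']
    · exact absurd hd (hhalf a b h w hw w' hw')
  refine ⟨⋃ a, suppF C e sol a, ?_, ?_⟩
  · intro w₁ hw₁ c₁ hc₁ w₂ hw₂ c₂ hc₂ heq
    obtain ⟨a, ha⟩ := Set.mem_iUnion.mp hw₁
    obtain ⟨b, hb⟩ := Set.mem_iUnion.mp hw₂
    have hd : w₁ - w₂ ∈ C - C := by
      have h12 : w₁ - w₂ = c₂ - c₁ := by
        rw [sub_eq_sub_iff_add_eq_add, heq, add_comm]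
      rw [h12]
      exact Set.sub_mem_sub hc₂ hc₁
    have hw12 : w₁ = w₂ := hdiff a b w₁ ha w₂ hb hd
    refine ⟨hw12, ?_⟩
    rw [hw12] at heq
    exact add_left_cancel heq
  · intro D hCD hsupp
    obtain ⟨x, hxD, hxC⟩ := Set.exists_of_ssubset hCD
    have hea : e (e.symm x) = x := e.apply_symm_apply x
    have hx : e (e.symm x) ∉ C := by rwa [hea]
    obtain ⟨t, ht1, ht2, hfa⟩ := hchar (e.symm x) hx
    have hcC : (sol (e (e.symm x)) hx).choose ∈ C := (sol (e (e.symm x)) hx).choose_spec.1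
    have htW : t ∈ ⋃ a, suppF C e sol a :=
      Set.mem_iUnion.mpr ⟨e.symm x, by rw [hfa]; exact Set.mem_insert _ _⟩
    have htW2 : t + (e (e.symm x) - (sol (e (e.symm x)) hx).choose) ∈ ⋃ a, suppF C e sol a :=
      Set.mem_iUnion.mpr ⟨e.symm x, by rw [hfa]; exact Set.mem_insert_iff.mpr (Or.inr rfl)⟩
    obtain ⟨h1, h2⟩ := hsupp t htW x hxD _ htW2 _ (hCD.1 hcC) (by rw [add_assoc, sub_add_cancel, hea])
    exact hxC (by rw [h2]; exact hcC)
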